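/- Let K be a valuation field of height 1 and M a torsion-free O_K-module. Then the rank of M is countable (i.e., dim_K(K ⊗_{O_K} M) ≤ ℵ₀) if and only if M is countably generated, i.e., there is a countable subset of M generating it as an O_K-module. -/

import Mathlib

section SubK

variable {K : Type*} [Field K]

/-- divisibility helper -/
lemma aux_div (OK : ValuationSubring K) (v : Valuation K NNReal)
    (hv : ∀ x : K, v x ≤ 1 ↔ x ∈ OK) {t y : K} (ht : t ≠ 0) (h : v y ≤ v t) :
    ∃ r : ↥OK, r • t = y := by
  have hvt : v t ≠ 0 := (Valuation.ne_zero_iff v).mpr ht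
  have : v (y / t) ≤ 1 := by
    rw [v.map_div, div_le_one (lt_of_le_of_ne zero_le (Ne.symm hvt))]
    exact h
  refine ⟨⟨y / t, (hv _).mp this⟩, ?_⟩
  show (y / t) • t = y
  rw [smul_eq_mul, div_mul_cancel₀ _ ht]

/-- Every `O_K`-submodule of `K` is countably generated. -/
lemma aux_subK (OK : ValuationSubring K) (v : Valuation K NNReal)
    (hv : ∀ x : K, v x ≤ 1 ↔ x ∈ OK) (N : Submodule ↥OK K) :
    ∃ S : Set K, S.Countable ∧ Submodule.span ↥OK S = N := by
  by_cases hmax : ∃ t ∈ N, ∀ y ∈ N, v y ≤ v t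
  · obtain ⟨t, htN, hmax⟩ := hmax
    refine ⟨{t}, Set.countable_singleton t, le_antisymm ?_ ?_⟩
    · rw [Submodule.span_le, Set.singleton_subset_iff]; exact htN
    · intro y hy
      by_cases ht : t = 0
      · have h0 : v y = 0 := le_antisymm (by simpa [ht] using hmax y hy) zero_le
        have : y = 0 := by
          by_contra hy0
          exact (Valuation.ne_zero_iff v).mpr hy0 h0
        simp [this]
      · obtain ⟨r, hr⟩ := aux_div OK v hv ht (hmax y hy)
        exact hr ▸ Submodule.smul_mem _ r (Submodule.subset_span rfl)
  · push_neg at hmax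
    have key : ∀ q : ℚ, ∃ x : K,
        (∃ y ∈ N, Real.toNNReal q < v y) → x ∈ N ∧ Real.toNNReal q < v x := by
      intro q
      by_cases h : ∃ y ∈ N, Real.toNNReal q < v y
      · obtain ⟨y, hy, hvy⟩ := h; exact ⟨y, fun _ => ⟨hy, hvy⟩⟩
      · exact ⟨0, fun hc => absurd hc h⟩
    choose g hg using key
    refine ⟨Set.range g ∩ N, (Set.countable_range g).mono Set.inter_subset_left,
      le_antisymm ?_ ?_⟩
    · rw [Submodule.span_le]; intro x hx; exact hx.2
    · intro y hy
      by_cases hy0 : y = 0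
      · simp [hy0]
      · obtain ⟨y', hy'N, hy'⟩ := hmax y hy
        have h1 : (v y : ℝ) < (v y' : ℝ) := by exact_mod_cast hy'
        obtain ⟨q, hq1, hq2⟩ := exists_rat_btwn h1
        have hq0 : (0:ℝ) ≤ (q:ℝ) := le_of_lt ((v y).coe_nonneg.trans_lt hq1)
        have hqlt : Real.toNNReal q < v y' := by
          rw [← NNReal.coe_lt_coe, Real.coe_toNNReal _ hq0]; exact hq2
        have hylt : v y < Real.toNNReal q := by
          rw [← NNReal.coe_lt_coe, Real.coe_toNNReal _ hq0]; exact hq1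
        obtain ⟨hgN, hgq⟩ := hg q ⟨y', hy'N, hqlt⟩
        have hgy : v y ≤ v (g q) := le_of_lt (hylt.trans hgq)
        have hg0 : g q ≠ 0 := by
          intro h0
          have : v (g q) = 0 := by simp [h0]
          exact absurd (this ▸ (hylt.trans hgq)) (by simp)
        obtain ⟨r, hr⟩ := aux_div OK v hv hg0 hgy
        exact hr ▸ Submodule.smul_mem _ r (Submodule.subset_span ⟨⟨q, rfl⟩, hgN⟩)

end SubK

section Transfer

variable {R X : Type*} [CommRing R] [AddCommGroup X] [Module R X]

/-- transfer countable generation through `comap` of the inclusion of a submodule -/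
lemma aux_comap (N Q : Submodule R X) (hQN : Q ≤ N)
    (hQ : ∃ S : Set X, S.Countable ∧ Submodule.span R S = Q) :
    ∃ S : Set ↥N, S.Countable ∧ Submodule.span R S = Submodule.comap N.subtype Q := by
  obtain ⟨S, hSc, hSs⟩ := hQ
  have hSQ : S ⊆ (Q : Set X) := hSs ▸ Submodule.subset_span
  refine ⟨(N.subtype) ⁻¹' S, hSc.preimage N.injective_subtype, ?_⟩
  apply Submodule.map_injective_of_injective N.injective_subtype
  rw [Submodule.map_span, Set.image_preimage_eq_of_subset, hSs,
    Submodule.map_comap_subtype, inf_eq_right.mpr hQN]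
  exact fun x hx => ⟨⟨x, hQN (hSQ hx)⟩, rfl⟩

lemma aux_map {Y : Type*} [AddCommGroup Y] [Module R Y] (f : X →ₗ[R] Y)
    (Q : Submodule R X)
    (hQ : ∃ S : Set X, S.Countable ∧ Submodule.span R S = Q) :
    ∃ S : Set Y, S.Countable ∧ Submodule.span R S = Submodule.map f Q := by
  obtain ⟨S, hSc, hSs⟩ := hQ
  exact ⟨f '' S, hSc.image f, by rw [← Submodule.map_span, hSs]⟩

end Transfer

section Rank1

variable {K : Type*} [Field K] (OK : ValuationSubring K)
    (v : Valuation K NNReal)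

/-- Any `O_K`-submodule of a cyclic `K`-subspace is countably generated. -/
lemma aux_rank1 (hv : ∀ x : K, v x ≤ 1 ↔ x ∈ OK)
    {V : Type*} [AddCommGroup V] [Module K V] [Module ↥OK V] [IsScalarTower ↥OK K V]
    (a : V) (P : Submodule ↥OK V) (hP : ∀ x ∈ P, ∃ c : K, c • a = x) :
    ∃ S : Set V, S.Countable ∧ Submodule.span ↥OK S = P := by
  set g : K →ₗ[↥OK] V := (LinearMap.toSpanSingleton K V a).restrictScalars ↥OK with hg
  have hPr : P ≤ LinearMap.range g := by
    intro x hx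
    obtain ⟨c, hc⟩ := hP x hx
    exact ⟨c, hc⟩
  have := aux_map g (Submodule.comap g P) (aux_subK OK v hv _)
  rwa [Submodule.map_comap_eq, inf_eq_right.mpr hPr] at this

end Rank1

open TensorProduct

section Aux

/-- Extension lemma: if kernel and range of a linear map are countably generated,
so is the domain. -/
lemma aux_ext {R X Y : Type*} [CommRing R] [AddCommGroup X] [AddCommGroup Y]
    [Module R X] [Module R Y] (f : X →ₗ[R] Y)
    (h1 : ∃ S : Set X, S.Countable ∧ Submodule.span R S = LinearMap.ker f)
    (h2 : ∃ T : Set Y, T.Countable ∧ Submodule.span R T = LinearMap.range f) :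
    ∃ U : Set X, U.Countable ∧ Submodule.span R U = ⊤ := by
  obtain ⟨S, hSc, hSs⟩ := h1
  obtain ⟨T, hTc, hTs⟩ := h2
  have hTr : ∀ t : T, ∃ x : X, f x = (t : Y) := by
    rintro ⟨t, ht⟩
    have : (t : Y) ∈ LinearMap.range f := hTs ▸ Submodule.subset_span ht
    exact this
  choose g hg using hTr
  haveI : Countable T := hTc.to_subtype
  refine ⟨S ∪ Set.range g, hSc.union (Set.countable_range g), ?_⟩
  rw [eq_top_iff]
  intro x _
  have hfx : f x ∈ Submodule.span R T := by
    rw [hTs]; exact LinearMap.mem_range_self f x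
  have hle : Submodule.span R T ≤
      Submodule.map f (Submodule.span R (S ∪ Set.range g)) := by
    rw [Submodule.span_le]
    intro t ht
    exact ⟨g ⟨t, ht⟩, Submodule.subset_span (Or.inr ⟨⟨t, ht⟩, rfl⟩), hg ⟨t, ht⟩⟩
  obtain ⟨y, hy, hfy⟩ := hle hfx
  have hker : x - y ∈ LinearMap.ker f := by
    simp [LinearMap.mem_ker, map_sub, hfy]
  have : x - y ∈ Submodule.span R (S ∪ Set.range g) :=
    Submodule.span_mono Set.subset_union_left (hSs ▸ hker :)
  have := Submodule.add_mem _ this hy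
  simpa using this

end Aux

section FinCase

variable {K : Type*} [Field K] (OK : ValuationSubring K) (v : Valuation K NNReal)
    {V : Type*} [AddCommGroup V] [Module K V] [Module ↥OK V] [IsScalarTower ↥OK K V]

lemma aux_fin (hv : ∀ x : K, v x ≤ 1 ↔ x ∈ OK) (s : Finset V) :
    ∀ N : Submodule ↥OK V, (N : Set V) ⊆ (Submodule.span K (s : Set V) : Set V) →
    ∃ S : Set V, S.Countable ∧ Submodule.span ↥OK S = N := by
  classical
  induction s using Finset.induction_on with
  | empty =>
      intro N hN
      refine ⟨∅, Set.countable_empty, ?_⟩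
      rw [Submodule.span_empty]
      symm
      rw [eq_bot_iff]
      intro x hx
      have h := hN hx
      rw [Finset.coe_empty, Submodule.span_empty] at h
      simpa using h
  | @insert a s ha ih =>
      intro N hN
      rw [Finset.coe_insert] at hN
      set W : Submodule K V := Submodule.span K (s : Set V) with hW
      set f : ↥N →ₗ[↥OK] V ⧸ W :=
        (W.mkQ.restrictScalars ↥OK).comp N.subtype with hf
      have hker : LinearMap.ker f
          = Submodule.comap N.subtype (N ⊓ W.restrictScalars ↥OK) := by
        ext x
        simp [hf, LinearMap.mem_ker, Submodule.Quotient.mk_eq_zero, x.2]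
      have h1 : ∃ S : Set ↥N, S.Countable ∧ Submodule.span ↥OK S = LinearMap.ker f := by
        rw [hker]
        exact aux_comap N _ inf_le_left
          (ih _ (fun x hx => by exact hx.2))
      have h2 : ∃ T : Set (V ⧸ W), T.Countable ∧
          Submodule.span ↥OK T = LinearMap.range f := by
        apply aux_rank1 OK v hv (W.mkQ a)
        rintro x ⟨⟨y, hyN⟩, rfl⟩
        have hy : y ∈ Submodule.span K (insert a (s : Set V)) := hN hyN
        rw [Submodule.mem_span_insert] at hy
        obtain ⟨c, z, hz, rfl⟩ := hy
        refine ⟨c, ?_⟩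
        have hz0 : W.mkQ z = 0 := (Submodule.Quotient.mk_eq_zero _).mpr hz
        show c • W.mkQ a = f ⟨c • a + z, hyN⟩
        simp [hf, map_add, map_smul, hz0]
      obtain ⟨U, hUc, hUs⟩ := aux_ext f h1 h2
      refine ⟨N.subtype '' U, hUc.image _, ?_⟩
      rw [← Submodule.map_span, hUs, Submodule.map_top, Submodule.range_subtype]

end FinCase

section CtbleCase

variable {K : Type*} [Field K] (OK : ValuationSubring K) (v : Valuation K NNReal)
    {V : Type*} [AddCommGroup V] [Module K V] [Module ↥OK V] [IsScalarTower ↥OK K V]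

lemma aux_ctble (hv : ∀ x : K, v x ≤ 1 ↔ x ∈ OK)
    (hB : ∃ B : Set V, B.Countable ∧ Submodule.span K B = ⊤)
    (N : Submodule ↥OK V) :
    ∃ S : Set V, S.Countable ∧ Submodule.span ↥OK S = N := by
  classical
  obtain ⟨B, hBc, hBs⟩ := hB
  have hB' : Submodule.span K (insert 0 B) = ⊤ := by
    rw [Submodule.span_insert_zero, hBs]
  obtain ⟨fseq, hfeq⟩ := (hBc.insert 0).exists_eq_range ⟨0, Set.mem_insert 0 B⟩
  set Wn : ℕ → Submodule K V := fun n => Submodule.span K (fseq '' Set.Iic n) with hWn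
  have hWmono : Monotone Wn := fun m n h =>
    Submodule.span_mono (Set.image_mono (Set.Iic_subset_Iic.mpr h))
  have hmem : ∀ x : V, ∃ n, x ∈ Wn n := by
    intro x
    have hx : x ∈ Submodule.span K (Set.range fseq) := by
      rw [← hfeq, hB']; trivial
    have hle : Submodule.span K (Set.range fseq) ≤ ⨆ n, Wn n := by
      rw [Submodule.span_le]
      rintro y ⟨n, rfl⟩
      exact (le_iSup Wn n) (Submodule.subset_span ⟨n, Set.self_mem_Iic, rfl⟩)
    exact (Submodule.mem_iSup_of_directed Wn hWmono.directed_le).mp (hle hx)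
  have hfin : ∀ n : ℕ, ∃ S : Set V, S.Countable ∧
      Submodule.span ↥OK S = N ⊓ (Wn n).restrictScalars ↥OK := by
    intro n
    apply aux_fin OK v hv (Finset.image fseq (Finset.Iic n))
    intro x hx
    have : ((Finset.image fseq (Finset.Iic n) : Finset V) : Set V) = fseq '' Set.Iic n := by
      simp [Finset.coe_image]
    rw [this]
    exact hx.2
  choose Sn hSnc hSns using hfin
  refine ⟨⋃ n, Sn n, Set.countable_iUnion hSnc, ?_⟩
  rw [Submodule.span_iUnion]
  apply le_antisymm
  · exact iSup_le fun n => le_of_eq_of_le (hSns n) inf_le_left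
  · intro x hx
    obtain ⟨n, hn⟩ := hmem x
    exact Submodule.mem_iSup_of_mem n ((hSns n).symm ▸ Submodule.mem_inf.mpr ⟨hx, hn⟩)

end CtbleCase

/-- Let `K` be a valuation field of height `1` and `M` a torsion-free
`O_K`-module.  Then the rank of `M` is countable (i.e. `dim_K (K ⊗ M) ≤ ℵ₀`) if and only if
`M` is countably generated. -/
theorem statement4 (K : Type*) [Field K] (OK : ValuationSubring K)
    (hnf : ¬ IsField ↥OK)
    (v : Valuation K NNReal) (hv : ∀ x : K, v x ≤ 1 ↔ x ∈ OK)
    (M : Type*) [AddCommGroup M] [Module ↥OK M]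
    (htf : ∀ (r : ↥OK) (x : M), r • x = 0 → r = 0 ∨ x = 0) :
    Module.rank K (K ⊗[↥OK] M) ≤ Cardinal.aleph0 ↔
      ∃ S : Set M, S.Countable ∧ Submodule.span ↥OK S = ⊤ := by
  constructor
  · intro hrank
    set j : M →ₗ[↥OK] K ⊗[↥OK] M := TensorProduct.mk ↥OK K M 1 with hj
    haveI : IsLocalizedModule (nonZeroDivisors ↥OK) j :=
      (isLocalizedModule_iff_isBaseChange (nonZeroDivisors ↥OK) K j).mpr
        (TensorProduct.isBaseChange ↥OK M K)
    have hinj : Function.Injective j := by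
      intro a b hab
      have h0 : j (a - b) = 0 := by rw [map_sub, hab, sub_self]
      obtain ⟨s, hs⟩ := (IsLocalizedModule.eq_zero_iff (nonZeroDivisors ↥OK) j).mp h0
      have hs0 : (s : ↥OK) ≠ 0 := nonZeroDivisors.coe_ne_zero s
      have := htf s (a - b) hs
      rcases this with h | h
      · exact absurd h hs0
      · exact sub_eq_zero.mp h
    -- countable spanning set over K
    have hB : ∃ B : Set (K ⊗[↥OK] M), B.Countable ∧ Submodule.span K B = ⊤ := by
      let b := Module.Basis.ofVectorSpace K (K ⊗[↥OK] M)
      have hcard : Cardinal.mk (Module.Basis.ofVectorSpaceIndex K (K ⊗[↥OK] M))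
          ≤ Cardinal.aleph0 := by
        rw [b.mk_eq_rank'']
        exact hrank
      haveI : Countable (Module.Basis.ofVectorSpaceIndex K (K ⊗[↥OK] M)) :=
        Cardinal.mk_le_aleph0_iff.mp hcard
      exact ⟨Set.range b, Set.countable_range b, b.span_eq⟩
    obtain ⟨S, hSc, hSs⟩ := aux_ctble OK v hv hB (LinearMap.range j)
    have hSr : S ⊆ Set.range j := by
      intro x hx
      have : x ∈ LinearMap.range j := hSs ▸ Submodule.subset_span hx
      exact this
    refine ⟨j ⁻¹' S, hSc.preimage hinj, ?_⟩
    apply Submodule.map_injective_of_injective hinj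
    rw [Submodule.map_span, Set.image_preimage_eq_of_subset hSr, hSs,
      Submodule.map_top, LinearMap.range_eq_map]
  · rintro ⟨S, hSc, hSs⟩
    set S' : Set (K ⊗[↥OK] M) := (fun m => (1 : K) ⊗ₜ[↥OK] m) '' S with hS'
    have hspan : Submodule.span K S' = ⊤ := by
      rw [eq_top_iff]
      rintro x -
      induction x with
      | zero => exact Submodule.zero_mem _
      | tmul k m =>
          have hm : m ∈ Submodule.span ↥OK S := hSs ▸ Submodule.mem_top
          induction hm using Submodule.span_induction generalizing k with
          | mem y hy =>
              have : (1 : K) ⊗ₜ[↥OK] y ∈ Submodule.span K S' :=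
                Submodule.subset_span ⟨y, hy, rfl⟩
              have hk : k ⊗ₜ[↥OK] y = k • ((1 : K) ⊗ₜ[↥OK] y) := by
                rw [smul_tmul', smul_eq_mul, mul_one]
              rw [hk]
              exact Submodule.smul_mem _ k this
          | zero => simp
          | add y z _ _ hy hz =>
              rw [TensorProduct.tmul_add]
              exact Submodule.add_mem _ (hy k) (hz k)
          | smul r y _ hy =>
              rw [← TensorProduct.smul_tmul]
              exact hy (r • k)
      | add x y hx hy => exact Submodule.add_mem _ hx hy
    have h1 : Cardinal.mk S' ≤ Cardinal.aleph0 := by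
      haveI : Countable S' := (hSc.image _).to_subtype
      exact Cardinal.mk_le_aleph0
    calc Module.rank K (K ⊗[↥OK] M)
        = Module.rank K (⊤ : Submodule K (K ⊗[↥OK] M)) := (rank_top K _).symm
      _ = Module.rank K (Submodule.span K S') := by rw [hspan]
      _ ≤ Cardinal.mk S' := rank_span_le S'
      _ ≤ Cardinal.aleph0 := h1
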